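/- arXiv:1904.02783 — 4 statements merged into one kernel-verified Lean document; each statement's English description precedes it below -/
import Mathlib

section
/- Let S be Gamma-distributed with shape P+1 and rate 1 (pdf x^P e^{−x}/P!), and let ε, ρ, γ_0, γ_1 > 0 satisfy γ_0^2 > γ_1^2 ε. Then P( ργ_0^2 / (ργ_1^2 + ((P+1)/S)) < ε ) = g(P+1, ε(P+1)/(ρ(γ_0^2 − γ_1^2 ε)))/P!, where g(a,x) = ∫_0^x t^{a−1}e^{−t} dt is the lower incomplete Gamma function. -/
open MeasureTheory ProbabilityTheory

/-- If `S` is Gamma-distributed with shape `P+1` and rate 1 and `γ_0² > γ_1² ε`, then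
`P( ργ_0²/(ργ_1² + (P+1)/S) < ε ) = g(P+1, ε(P+1)/(ρ(γ_0² − γ_1² ε)))/P!`, where
`g` is the lower incomplete Gamma function. -/
theorem stmt_8 {Ω : Type*} [MeasureSpace Ω] [IsProbabilityMeasure (volume : Measure Ω)]
    (P : ℕ) (S : Ω → ℝ) (hSmeas : Measurable S)
    (hlaw : Measure.map S volume = gammaMeasure ((P : ℝ) + 1) 1)
    (ε ρ γ₀ γ₁ : ℝ) (hε : 0 < ε) (hρ : 0 < ρ) (hγ₀ : 0 < γ₀) (hγ₁ : 0 < γ₁)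
    (hpow : γ₁ ^ 2 * ε < γ₀ ^ 2) :
    (volume {ω : Ω | ρ * γ₀ ^ 2 / (ρ * γ₁ ^ 2 + ((P : ℝ) + 1) / S ω) < ε}).toReal =
      (∫ t in Set.Ioo (0 : ℝ) (ε * ((P : ℝ) + 1) / (ρ * (γ₀ ^ 2 - γ₁ ^ 2 * ε))),
        t ^ P * Real.exp (-t)) / (P.factorial : ℝ) := by
  set c : ℝ := ε * ((P : ℝ) + 1) / (ρ * (γ₀ ^ 2 - γ₁ ^ 2 * ε)) with hc_def
  set A : Set ℝ := {x : ℝ | ρ * γ₀ ^ 2 / (ρ * γ₁ ^ 2 + ((P : ℝ) + 1) / x) < ε} with hA_def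
  have hP1 : (0 : ℝ) < (P : ℝ) + 1 := by positivity
  have hk : (0 : ℝ) < ρ * (γ₀ ^ 2 - γ₁ ^ 2 * ε) := mul_pos hρ (by linarith)
  have hc : 0 < c := div_pos (mul_pos hε hP1) hk
  have hA : MeasurableSet A := by
    apply measurableSet_lt _ measurable_const
    exact measurable_const.div (measurable_const.add (measurable_const.div measurable_id))
  -- key pointwise equivalence for positive x
  have hiff : ∀ x : ℝ, 0 < x → (x ∈ A ↔ x ∈ Set.Ioo (0 : ℝ) c) := by
    intro x hx
    have hD : 0 < ρ * γ₁ ^ 2 + ((P : ℝ) + 1) / x := by positivity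
    have hcancel : ((P : ℝ) + 1) / x * x = (P : ℝ) + 1 := div_mul_cancel₀ _ hx.ne'
    simp only [hA_def, Set.mem_setOf_eq, Set.mem_Ioo, hc_def]
    rw [div_lt_iff₀ hD, lt_div_iff₀ hk]
    constructor
    · intro h
      refine ⟨hx, ?_⟩
      nlinarith [mul_lt_mul_of_pos_right h hx]
    · rintro ⟨-, h⟩
      have h' : x * (ρ * γ₀ ^ 2) < x * (ε * (ρ * γ₁ ^ 2 + ((P : ℝ) + 1) / x)) := by
        nlinarith
      exact lt_of_mul_lt_mul_left h' hx.le
  -- transfer the measure to the gamma measure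
  have h1 : volume {ω : Ω | ρ * γ₀ ^ 2 / (ρ * γ₁ ^ 2 + ((P : ℝ) + 1) / S ω) < ε}
      = gammaMeasure ((P : ℝ) + 1) 1 A := by
    rw [← hlaw, Measure.map_apply hSmeas hA]
    rfl
  have h2 : gammaMeasure ((P : ℝ) + 1) 1 A
      = ∫⁻ x in A, gammaPDF ((P : ℝ) + 1) 1 x := by
    rw [gammaMeasure, withDensity_apply _ hA]
  have h0ae : ∀ᵐ x : ℝ, x ≠ 0 := by
    have : (volume : Measure ℝ) {(0 : ℝ)} = 0 := Real.volume_singleton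
    exact compl_mem_ae_iff.mpr this
  have h3 : ∫⁻ x in A, gammaPDF ((P : ℝ) + 1) 1 x
      = ∫⁻ x in Set.Ioo (0 : ℝ) c, gammaPDF ((P : ℝ) + 1) 1 x := by
    rw [← lintegral_indicator hA, ← lintegral_indicator measurableSet_Ioo]
    apply lintegral_congr_ae
    filter_upwards [h0ae] with x hx
    rcases hx.lt_or_gt with hneg | hpos
    · have hz : gammaPDF ((P : ℝ) + 1) 1 x = 0 := gammaPDF_of_neg hneg
      have hnot : x ∉ Set.Ioo (0 : ℝ) c := fun h => absurd h.1 (not_lt.mpr hneg.le)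
      by_cases hxa : x ∈ A
      · rw [Set.indicator_of_mem hxa, Set.indicator_of_notMem hnot, hz]
      · rw [Set.indicator_of_notMem hxa, Set.indicator_of_notMem hnot]
    · have := hiff x hpos
      by_cases hxa : x ∈ A
      · rw [Set.indicator_of_mem hxa, Set.indicator_of_mem (this.mp hxa)]
      · rw [Set.indicator_of_notMem hxa,
          Set.indicator_of_notMem (fun h => hxa (this.mpr h))]
  -- compute the pdf on `Ioo 0 c`
  have h4 : ∫⁻ x in Set.Ioo (0 : ℝ) c, gammaPDF ((P : ℝ) + 1) 1 x
      = ∫⁻ x in Set.Ioo (0 : ℝ) c,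
          ENNReal.ofReal (x ^ P * Real.exp (-x) / (P.factorial : ℝ)) := by
    apply setLIntegral_congr_fun measurableSet_Ioo
    intro x hx
    rw [gammaPDF_of_nonneg hx.1.le]
    congr 1
    rw [Real.one_rpow, Real.Gamma_nat_eq_factorial, add_sub_cancel_right,
      Real.rpow_natCast]
    push_cast
    ring
  have hnonneg : ∀ x ∈ Set.Ioo (0 : ℝ) c,
      0 ≤ x ^ P * Real.exp (-x) / (P.factorial : ℝ) := by
    intro x hx
    have := hx.1
    positivity
  have hint : IntegrableOn (fun x : ℝ => x ^ P * Real.exp (-x) / (P.factorial : ℝ))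
      (Set.Ioo (0 : ℝ) c) := by
    have hcont : Continuous (fun x : ℝ => x ^ P * Real.exp (-x) / (P.factorial : ℝ)) :=
      ((continuous_pow P).mul (Real.continuous_exp.comp continuous_neg)).div_const _
    exact (hcont.continuousOn.integrableOn_Icc).mono_set Set.Ioo_subset_Icc_self
  have h5 : ∫⁻ x in Set.Ioo (0 : ℝ) c,
        ENNReal.ofReal (x ^ P * Real.exp (-x) / (P.factorial : ℝ))
      = ENNReal.ofReal
          (∫ x in Set.Ioo (0 : ℝ) c, x ^ P * Real.exp (-x) / (P.factorial : ℝ)) := by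
    rw [← ofReal_integral_eq_lintegral_ofReal hint]
    rw [Filter.EventuallyLE, ae_restrict_iff' measurableSet_Ioo]
    exact Filter.Eventually.of_forall hnonneg
  rw [h1, h2, h3, h4, h5, ENNReal.toReal_ofReal
    (setIntegral_nonneg measurableSet_Ioo hnonneg), integral_div]
end

section
/- With the setup of the previous statement, the outage probability P(ρ) = g(P+1, ε(P+1)/(ρ(γ_0^2−γ_1^2 ε)))/P! satisfies lim_{ρ→∞} −log P(ρ)/log ρ = P+1, i.e., the detection of the last symbol achieves full multi-path diversity order P+1. -/
open MeasureTheory Filter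

lemma integral_pow_Ioo (P : ℕ) (x : ℝ) (hx : 0 < x) :
    (∫ t in Set.Ioo (0:ℝ) x, t ^ P) = x ^ (P+1) / (P+1) := by
  rw [← integral_Ioc_eq_integral_Ioo, ← intervalIntegral.integral_of_le hx.le,
    integral_pow]
  simp

lemma integrable_pow_exp (P : ℕ) (x : ℝ) :
    IntegrableOn (fun t : ℝ => t ^ P * Real.exp (-t)) (Set.Ioo 0 x) := by
  have : Continuous fun t : ℝ => t ^ P * Real.exp (-t) := by continuity
  exact (this.integrableOn_Icc).mono_set Set.Ioo_subset_Icc_self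

lemma integrable_pow' (P : ℕ) (x : ℝ) :
    IntegrableOn (fun t : ℝ => t ^ P) (Set.Ioo (0:ℝ) x) := by
  have : Continuous fun t : ℝ => t ^ P := by continuity
  exact (this.integrableOn_Icc).mono_set Set.Ioo_subset_Icc_self

lemma int_ub (P : ℕ) (x : ℝ) (hx : 0 < x) :
    (∫ t in Set.Ioo (0:ℝ) x, t ^ P * Real.exp (-t)) ≤ x ^ (P+1) / (P+1) := by
  rw [← integral_pow_Ioo P x hx]
  apply setIntegral_mono_on (integrable_pow_exp P x) (integrable_pow' P x) measurableSet_Ioo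
  intro t ht
  have h1 : Real.exp (-t) ≤ 1 := Real.exp_le_one_iff.mpr (by linarith [ht.1])
  nlinarith [pow_pos ht.1 P, Real.exp_pos (-t)]

lemma int_lb (P : ℕ) (x : ℝ) (hx : 0 < x) :
    Real.exp (-x) * (x ^ (P+1) / (P+1)) ≤ ∫ t in Set.Ioo (0:ℝ) x, t ^ P * Real.exp (-t) := by
  have := integral_pow_Ioo P x hx
  have key : (∫ t in Set.Ioo (0:ℝ) x, t ^ P * Real.exp (-x))
      ≤ ∫ t in Set.Ioo (0:ℝ) x, t ^ P * Real.exp (-t) := by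
    apply setIntegral_mono_on ((integrable_pow' P x).mul_const _) (integrable_pow_exp P x)
      measurableSet_Ioo
    intro t ht
    have : Real.exp (-x) ≤ Real.exp (-t) := Real.exp_le_exp.mpr (by linarith [ht.2])
    nlinarith [pow_pos ht.1 P]
  calc Real.exp (-x) * (x ^ (P+1) / (P+1))
      = ∫ t in Set.Ioo (0:ℝ) x, t ^ P * Real.exp (-x) := by
        rw [integral_mul_const, integral_pow_Ioo P x hx]; ring
    _ ≤ _ := key

/-- The FD-DFE outage probability `P(ρ) = g(P+1, ε(P+1)/(ρ(γ_0²−γ_1²ε)))/P!` satisfies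
`lim_{ρ→∞} −log P(ρ)/log ρ = P+1`: full multi-path diversity order `P+1`. -/
theorem stmt_9 (P : ℕ) (ε γ₀ γ₁ : ℝ) (hε : 0 < ε) (hγ₀ : 0 < γ₀) (hγ₁ : 0 < γ₁)
    (hpow : γ₁ ^ 2 * ε < γ₀ ^ 2) :
    Tendsto (fun ρ : ℝ =>
        -Real.log ((∫ t in Set.Ioo (0 : ℝ)
            (ε * ((P : ℝ) + 1) / (ρ * (γ₀ ^ 2 - γ₁ ^ 2 * ε))),
          t ^ P * Real.exp (-t)) / (P.factorial : ℝ)) / Real.log ρ)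
      atTop (nhds ((P : ℝ) + 1)) := by
  have hD : (0:ℝ) < γ₀ ^ 2 - γ₁ ^ 2 * ε := by linarith
  set D : ℝ := γ₀ ^ 2 - γ₁ ^ 2 * ε with hDdef
  set c : ℝ := ε * ((P:ℝ) + 1) / D with hcdef
  have hc : 0 < c := by positivity
  set K : ℝ := Real.log ((P:ℝ)+1) + Real.log (P.factorial : ℝ) - ((P:ℝ)+1) * Real.log c with hKdef
  have hfac : (0:ℝ) < (P.factorial : ℝ) := by exact_mod_cast P.factorial_pos
  have hP1 : (0:ℝ) < (P:ℝ) + 1 := by positivity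
  -- limits of the bounding functions
  have hinv : Tendsto (fun ρ : ℝ => K / Real.log ρ) atTop (nhds 0) :=
    tendsto_const_nhds.div_atTop Real.tendsto_log_atTop
  have hczero : Tendsto (fun ρ : ℝ => c / ρ) atTop (nhds 0) :=
    tendsto_const_nhds.div_atTop tendsto_id
  have hg : Tendsto (fun ρ : ℝ => ((P:ℝ)+1) + K / Real.log ρ) atTop (nhds ((P:ℝ)+1)) := by
    simpa using tendsto_const_nhds.add hinv
  have hh : Tendsto (fun ρ : ℝ => ((P:ℝ)+1) + (K + c / ρ) / Real.log ρ) atTop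
      (nhds ((P:ℝ)+1)) := by
    have : Tendsto (fun ρ : ℝ => (K + c / ρ) / Real.log ρ) atTop (nhds 0) :=
      (tendsto_const_nhds.add hczero).div_atTop Real.tendsto_log_atTop
    simpa using tendsto_const_nhds.add this
  refine tendsto_of_tendsto_of_tendsto_of_le_of_le' hg hh ?_ ?_
  · -- lower bound
    filter_upwards [eventually_gt_atTop (1:ℝ)] with ρ hρ
    have hρ0 : 0 < ρ := lt_trans one_pos hρ
    have hL : 0 < Real.log ρ := Real.log_pos hρ
    have hxc : ε * ((P : ℝ) + 1) / (ρ * D) = c / ρ := by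
      rw [hcdef, div_div, mul_comm D ρ]
    have hx : 0 < c / ρ := by positivity
    set x : ℝ := c / ρ with hxdef
    rw [hxc]
    set I : ℝ := ∫ t in Set.Ioo (0:ℝ) x, t ^ P * Real.exp (-t) with hIdef
    have hIlb := int_lb P x hx
    have hIub := int_ub P x hx
    have hIpos : 0 < I := lt_of_lt_of_le (by positivity) hIlb
    -- log(I / P!) ≤ log(UB/P!) = -( (P+1) log ρ + K )
    have hlogUB : Real.log (x ^ (P+1) / ((P:ℝ)+1) / (P.factorial : ℝ))
        = -(((P:ℝ)+1) * Real.log ρ + K) := by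
      rw [div_div, Real.log_div (by positivity) (by positivity), Real.log_mul hP1.ne' hfac.ne', Real.log_pow,
        hxdef, Real.log_div hc.ne' hρ0.ne']
      push_cast
      ring
    have hmono : Real.log (I / (P.factorial : ℝ))
        ≤ -(((P:ℝ)+1) * Real.log ρ + K) := by
      rw [← hlogUB]
      apply Real.log_le_log (by positivity)
      gcongr
    have : ((P:ℝ)+1) * Real.log ρ + K ≤ -Real.log (I / (P.factorial : ℝ)) := by linarith
    calc ((P:ℝ)+1) + K / Real.log ρ
        = (((P:ℝ)+1) * Real.log ρ + K) / Real.log ρ := by field_simp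
      _ ≤ -Real.log (I / (P.factorial : ℝ)) / Real.log ρ := by gcongr
  · -- upper bound
    filter_upwards [eventually_gt_atTop (1:ℝ)] with ρ hρ
    have hρ0 : 0 < ρ := lt_trans one_pos hρ
    have hL : 0 < Real.log ρ := Real.log_pos hρ
    have hxc : ε * ((P : ℝ) + 1) / (ρ * D) = c / ρ := by
      rw [hcdef, div_div, mul_comm D ρ]
    have hx : 0 < c / ρ := by positivity
    set x : ℝ := c / ρ with hxdef
    rw [hxc]
    set I : ℝ := ∫ t in Set.Ioo (0:ℝ) x, t ^ P * Real.exp (-t) with hIdef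
    have hIlb := int_lb P x hx
    have hlogLB : Real.log (Real.exp (-x) * (x ^ (P+1) / ((P:ℝ)+1)) / (P.factorial : ℝ))
        = -(((P:ℝ)+1) * Real.log ρ + (K + x)) := by
      rw [Real.log_div (by positivity) (by positivity),
        Real.log_mul (Real.exp_pos _).ne' (by positivity), Real.log_exp,
        Real.log_div (by positivity) (by positivity), Real.log_pow,
        hxdef, Real.log_div hc.ne' hρ0.ne']
      push_cast
      ring
    have hmono : -(((P:ℝ)+1) * Real.log ρ + (K + x))
        ≤ Real.log (I / (P.factorial : ℝ)) := by
      rw [← hlogLB]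
      apply Real.log_le_log (by positivity)
      gcongr
    have h2 : -Real.log (I / (P.factorial : ℝ)) ≤ ((P:ℝ)+1) * Real.log ρ + (K + x) := by
      linarith
    calc -Real.log (I / (P.factorial : ℝ)) / Real.log ρ
        ≤ (((P:ℝ)+1) * Real.log ρ + (K + x)) / Real.log ρ := by gcongr
      _ = ((P:ℝ)+1) + (K + c / ρ) / Real.log ρ := by rw [← hxdef]; field_simp
end

section
/- Fix ε_0, γ_0, γ_1 > 0 with γ_0^2 > γ_1^2 ε_0 and a positive integer n = NM. Suppose for each ρ > 0 the outage probability P(ρ) satisfies 1 − e^{−c(ρ)/n} ≤ P(ρ) ≤ n(1 − e^{−c(ρ)}) where c(ρ) = ε_0/(ρ(γ_0^2 − γ_1^2 ε_0)). Then lim_{ρ→∞} −log P(ρ)/log ρ = 1, i.e., the diversity order equals 1. -/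
open Filter

/-- If for every `ρ > 0` the outage probability `P(ρ)` satisfies
`1 − e^{−c(ρ)/n} ≤ P(ρ) ≤ n(1 − e^{−c(ρ)})` with `c(ρ) = ε_0/(ρ(γ_0² − γ_1² ε_0))`,
then `lim_{ρ→∞} −log P(ρ)/log ρ = 1`: the diversity order is 1. -/
theorem stmt_11 (ε₀ γ₀ γ₁ : ℝ) (hε : 0 < ε₀) (hγ₀ : 0 < γ₀) (hγ₁ : 0 < γ₁)
    (hpow : γ₁ ^ 2 * ε₀ < γ₀ ^ 2) (n : ℕ) (hn : 1 ≤ n) (Pout : ℝ → ℝ)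
    (hbound : ∀ ρ : ℝ, 0 < ρ →
      1 - Real.exp (-(ε₀ / (ρ * (γ₀ ^ 2 - γ₁ ^ 2 * ε₀))) / n) ≤ Pout ρ ∧
      Pout ρ ≤ n * (1 - Real.exp (-(ε₀ / (ρ * (γ₀ ^ 2 - γ₁ ^ 2 * ε₀)))))) :
    Tendsto (fun ρ : ℝ => -Real.log (Pout ρ) / Real.log ρ) atTop (nhds 1) := by
  obtain ⟨K, hKdef⟩ : ∃ K : ℝ, K = γ₀ ^ 2 - γ₁ ^ 2 * ε₀ := ⟨_, rfl⟩
  have hKpos : 0 < K := by rw [hKdef]; linarith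
  have hnpos : (0 : ℝ) < n := by exact_mod_cast hn
  have hn1 : (1 : ℝ) ≤ n := by exact_mod_cast hn
  have hloglim : Tendsto (fun ρ : ℝ => (Real.log ρ)⁻¹) atTop (nhds 0) :=
    Real.tendsto_log_atTop.inv_tendsto_atTop
  obtain ⟨A, hAdef⟩ : ∃ A : ℝ, A = Real.log K - Real.log ε₀ - Real.log n := ⟨_, rfl⟩
  obtain ⟨B, hBdef⟩ : ∃ B : ℝ, B = Real.log K - Real.log ε₀ + Real.log (2 * n) := ⟨_, rfl⟩
  have hA : Tendsto (fun ρ : ℝ => 1 + A * (Real.log ρ)⁻¹) atTop (nhds 1) := by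
    have := (hloglim.const_mul A).const_add 1
    simpa using this
  have hB : Tendsto (fun ρ : ℝ => 1 + B * (Real.log ρ)⁻¹) atTop (nhds 1) := by
    have := (hloglim.const_mul B).const_add 1
    simpa using this
  have hev : ∀ᶠ ρ : ℝ in atTop,
      1 + A * (Real.log ρ)⁻¹ ≤ -Real.log (Pout ρ) / Real.log ρ ∧
      -Real.log (Pout ρ) / Real.log ρ ≤ 1 + B * (Real.log ρ)⁻¹ := by
    filter_upwards [eventually_ge_atTop (max 2 (2 * ε₀ / K))] with ρ hρ
    have hρ2 : (2 : ℝ) ≤ ρ := le_trans (le_max_left _ _) hρ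
    have hρpos : (0 : ℝ) < ρ := by linarith
    have hlρ : 0 < Real.log ρ := Real.log_pos (by linarith)
    obtain ⟨c, hcdef⟩ : ∃ c : ℝ, c = ε₀ / (ρ * K) := ⟨_, rfl⟩
    have hcpos : 0 < c := by rw [hcdef]; positivity
    have hchalf : c ≤ 1 / 2 := by
      rw [hcdef, div_le_div_iff₀ (by positivity) (by norm_num)]
      have h1 : 2 * ε₀ / K ≤ ρ := le_trans (le_max_right _ _) hρ
      have h2 : (2 * ε₀ / K) * K ≤ ρ * K := by
        exact mul_le_mul_of_nonneg_right h1 hKpos.le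
      rw [div_mul_cancel₀ _ hKpos.ne'] at h2
      linarith
    obtain ⟨hPlo, hPhi⟩ := hbound ρ hρpos
    rw [← hKdef, ← hcdef] at hPlo hPhi
    -- set x = c / n
    obtain ⟨x, hxdef⟩ : ∃ x : ℝ, x = c / n := ⟨_, rfl⟩
    have hx0 : 0 < x := by rw [hxdef]; positivity
    have hxhalf : x ≤ 1 / 2 := by
      rw [hxdef]
      calc c / (n : ℝ) ≤ c / 1 := by
            apply div_le_div_of_nonneg_left hcpos.le one_pos hn1
        _ = c := div_one c
        _ ≤ 1 / 2 := hchalf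
    -- lower bound on Pout: Pout ρ ≥ c / (2n) > 0
    have hexp : Real.exp (-x) ≤ (1 + x)⁻¹ := by
      rw [Real.exp_neg]
      apply inv_anti₀ (by positivity)
      linarith [Real.add_one_le_exp x]
    have hinv : (1 + x)⁻¹ ≤ 1 - x / 2 := by
      rw [inv_le_iff_one_le_mul₀ (by positivity)]
      nlinarith
    have hlow : c / (2 * n) ≤ Pout ρ := by
      have h5 : c / (2 * n) = x / 2 := by rw [hxdef]; ring
      have h6 : 1 - Real.exp (-x) ≥ x / 2 := by linarith
      rw [hxdef] at h6
      have h7 : -c / (n : ℝ) = -(c / n) := by ring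
      rw [h7] at hPlo
      rw [h5, hxdef]
      linarith
    have hPpos : 0 < Pout ρ := lt_of_lt_of_le (by positivity) hlow
    -- upper bound: Pout ρ ≤ n * c
    have hhi : Pout ρ ≤ n * c := by
      have h8 : 1 - Real.exp (-c) ≤ c := by
        linarith [Real.add_one_le_exp (-c)]
      nlinarith
    -- log computations
    have hlognc : Real.log ((n : ℝ) * c) =
        Real.log n + Real.log ε₀ - Real.log ρ - Real.log K := by
      rw [Real.log_mul (by positivity) hcpos.ne', hcdef,
        Real.log_div hε.ne' (by positivity), Real.log_mul hρpos.ne' hKpos.ne']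
      ring
    have hlogc2n : Real.log (c / (2 * n)) =
        Real.log ε₀ - Real.log ρ - Real.log K - Real.log (2 * n) := by
      rw [Real.log_div hcpos.ne' (by positivity), hcdef,
        Real.log_div hε.ne' (by positivity), Real.log_mul hρpos.ne' hKpos.ne']
      ring
    have hup : Real.log (Pout ρ) ≤ Real.log n + Real.log ε₀ - Real.log ρ - Real.log K := by
      rw [← hlognc]; exact Real.log_le_log hPpos hhi
    have hdn : Real.log ε₀ - Real.log ρ - Real.log K - Real.log (2 * n) ≤
        Real.log (Pout ρ) := by
      rw [← hlogc2n]; exact Real.log_le_log (by positivity) hlow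
    constructor
    · rw [le_div_iff₀ hlρ]
      have expand : (1 + A * (Real.log ρ)⁻¹) * Real.log ρ = Real.log ρ + A := by
        field_simp
      rw [expand, hAdef]; linarith
    · rw [div_le_iff₀ hlρ]
      have expand : (1 + B * (Real.log ρ)⁻¹) * Real.log ρ = Real.log ρ + B := by
        field_simp
      rw [expand, hBdef]; linarith
  exact tendsto_of_tendsto_of_tendsto_of_le_of_le' hA hB
    (hev.mono fun ρ h => h.1) (hev.mono fun ρ h => h.2)
end

section
/- Let G, H be independent unit-mean exponential random variables and ρ > 0, ε > 0. Then P( ρG/(ρH + 1) < ε ) = 1 − e^{−ε/ρ}/(1 + ε), and consequently lim_{ρ→∞} P(ρG/(ρH+1) < ε) = ε/(1+ε) > 0, i.e., the uplink fixed-rate outage probability exhibits an error floor. -/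
open MeasureTheory ProbabilityTheory Filter

section MyAux
open Set Real

lemma my_int_exp {b : ℝ} (hb : 0 < b) :
    ∫ x in Set.Ioi (0:ℝ), Real.exp (-(b*x)) = 1/b := by
  have h := integral_comp_mul_left_Ioi (fun x => Real.exp (-x)) 0 hb
  simp only [mul_zero, integral_exp_neg_Ioi, neg_zero, Real.exp_zero, smul_eq_mul, mul_one] at h
  rw [h, one_div]

lemma my_expMeasure_Iio {t : ℝ} (ht : 0 ≤ t) :
    expMeasure 1 (Set.Iio t) = ENNReal.ofReal (1 - Real.exp (-t)) := by
  have h1 : expMeasure 1 (Set.Iio t) = ∫⁻ y in Set.Iio t, exponentialPDF 1 y := by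
    rw [expMeasure, gammaMeasure, withDensity_apply _ measurableSet_Iio]; rfl
  rw [h1, setLIntegral_congr Iio_ae_eq_Iic,
    lintegral_exponentialPDF_eq_antiDeriv one_pos, if_pos ht, one_mul]

lemma my_expMeasure_neg : expMeasure 1 {x : ℝ | x < 0} = 0 := by
  have h1 : expMeasure 1 (Set.Iio 0) = ∫⁻ y in Set.Iio 0, exponentialPDF 1 y := by
    rw [expMeasure, gammaMeasure, withDensity_apply _ measurableSet_Iio]; rfl
  have := lintegral_exponentialPDF_of_nonpos (r := 1) (le_refl (0:ℝ))
  simpa [Set.Iio] using h1.trans this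

lemma my_real_integral {ε ρ : ℝ} (hε : 0 < ε) (hρ : 0 < ρ) :
    ∫ y in Set.Ioi (0:ℝ), Real.exp (-y) * (1 - Real.exp (-(ε*y+ε/ρ)))
      = 1 - Real.exp (-ε/ρ) / (1+ε) := by
  have h1ε : (0:ℝ) < 1 + ε := by linarith
  have hint1 : IntegrableOn (fun y : ℝ => Real.exp (-y)) (Set.Ioi 0) := by
    simpa using exp_neg_integrableOn_Ioi 0 one_pos
  have hint2 : IntegrableOn (fun y : ℝ => Real.exp (-((1+ε)*y))) (Set.Ioi 0) := by
    have := exp_neg_integrableOn_Ioi 0 h1ε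
    simpa only [neg_mul] using this
  have heq : ∀ y : ℝ, Real.exp (-y) * (1 - Real.exp (-(ε*y+ε/ρ)))
      = Real.exp (-y) - Real.exp (-(ε/ρ)) * Real.exp (-((1+ε)*y)) := by
    intro y
    rw [mul_sub, mul_one, ← Real.exp_add, ← Real.exp_add]
    ring_nf
  simp only [heq]
  rw [integral_sub hint1 (hint2.const_mul _), MeasureTheory.integral_const_mul, my_int_exp h1ε,
    integral_exp_neg_Ioi_zero, neg_div]
  ring

lemma my_lintegral {ε ρ : ℝ} (hε : 0 < ε) (hρ : 0 < ρ) :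
    ∫⁻ y, ENNReal.ofReal (1 - Real.exp (-(ε*y+ε/ρ))) ∂(expMeasure 1)
      = ENNReal.ofReal (1 - Real.exp (-ε/ρ) / (1+ε)) := by
  have h1ε : (0:ℝ) < 1 + ε := by linarith
  have hmg : Measurable fun y : ℝ => ENNReal.ofReal (1 - Real.exp (-(ε*y+ε/ρ))) := by
    fun_prop
  have hpdf : Measurable (exponentialPDF 1) :=
    (measurable_exponentialPDFReal 1).ennreal_ofReal
  rw [show expMeasure 1 = volume.withDensity (exponentialPDF 1) from rfl,
    lintegral_withDensity_eq_lintegral_mul volume hpdf hmg]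
  have h0 : ∀ᵐ y : ℝ, y ≠ (0:ℝ) := by
    rw [ae_iff]
    simp only [ne_eq, not_not, Set.setOf_eq_eq_singleton]
    exact Real.volume_singleton
  have hae : (fun y => (exponentialPDF 1 * fun y => ENNReal.ofReal (1 - Real.exp (-(ε*y+ε/ρ)))) y)
      =ᵐ[volume] (Set.Ioi (0:ℝ)).indicator
        (fun y => ENNReal.ofReal (Real.exp (-y) * (1 - Real.exp (-(ε*y+ε/ρ))))) := by
    filter_upwards [h0] with y hy
    rcases lt_or_gt_of_ne hy with hneg | hpos
    · simp only [Pi.mul_apply, exponentialPDF_of_neg hneg, zero_mul]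
      rw [Set.indicator_of_notMem (by simp [hneg.not_gt])]
    · simp only [Pi.mul_apply, exponentialPDF_of_nonneg hpos.le, one_mul]
      rw [Set.indicator_of_mem (Set.mem_Ioi.mpr hpos), ENNReal.ofReal_mul (Real.exp_nonneg _)]
  rw [lintegral_congr_ae hae, lintegral_indicator measurableSet_Ioi]
  have heq : ∀ y : ℝ, Real.exp (-y) * (1 - Real.exp (-(ε*y+ε/ρ)))
      = Real.exp (-y) - Real.exp (-(ε/ρ)) * Real.exp (-((1+ε)*y)) := by
    intro y
    rw [mul_sub, mul_one, ← Real.exp_add, ← Real.exp_add]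
    ring_nf
  have hint1 : IntegrableOn (fun y : ℝ => Real.exp (-y)) (Set.Ioi 0) := by
    simpa using exp_neg_integrableOn_Ioi 0 one_pos
  have hint2 : IntegrableOn (fun y : ℝ => Real.exp (-((1+ε)*y))) (Set.Ioi 0) := by
    have := exp_neg_integrableOn_Ioi 0 h1ε
    simpa only [neg_mul] using this
  have hint : Integrable (fun y : ℝ => Real.exp (-y) * (1 - Real.exp (-(ε*y+ε/ρ))))
      (volume.restrict (Set.Ioi 0)) := by
    have h := hint1.sub (hint2.const_mul (Real.exp (-(ε/ρ))))
    exact h.congr (Filter.Eventually.of_forall fun y => (heq y).symm)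
  have hnn : 0 ≤ᵐ[volume.restrict (Set.Ioi (0:ℝ))]
      fun y : ℝ => Real.exp (-y) * (1 - Real.exp (-(ε*y+ε/ρ))) := by
    rw [Filter.EventuallyLE, ae_restrict_iff' measurableSet_Ioi]
    refine Filter.Eventually.of_forall fun y hy => ?_
    simp only [Pi.zero_apply]
    have h1 : Real.exp (-(ε*y+ε/ρ)) ≤ 1 := by
      rw [Real.exp_le_one_iff]
      have hy' : (0:ℝ) < y := hy
      have hd : 0 < ε/ρ := div_pos hε hρ
      nlinarith
    exact mul_nonneg (Real.exp_nonneg _) (by linarith)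
  rw [← ofReal_integral_eq_lintegral_ofReal hint hnn, my_real_integral hε hρ]

end MyAux

/-- If `G, H` are independent unit-mean exponential random variables, then
`P(ρG/(ρH+1) < ε) = 1 − e^{−ε/ρ}/(1+ε)`; consequently the outage probability tends to
the error floor `ε/(1+ε) > 0` as `ρ → ∞`. -/
theorem stmt_18 {Ω : Type*} [MeasureSpace Ω] [IsProbabilityMeasure (volume : Measure Ω)]
    (G H : Ω → ℝ) (hGmeas : Measurable G) (hHmeas : Measurable H)
    (hGlaw : Measure.map G volume = expMeasure 1)
    (hHlaw : Measure.map H volume = expMeasure 1)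
    (hindep : IndepFun G H) (ε : ℝ) (hε : 0 < ε) :
    (∀ ρ : ℝ, 0 < ρ →
      (volume {ω : Ω | ρ * G ω / (ρ * H ω + 1) < ε}).toReal =
        1 - Real.exp (-ε / ρ) / (1 + ε)) ∧
    Tendsto (fun ρ : ℝ =>
        (volume {ω : Ω | ρ * G ω / (ρ * H ω + 1) < ε}).toReal)
      atTop (nhds (ε / (1 + ε))) ∧
    0 < ε / (1 + ε) := by
  have h1ε : (0:ℝ) < 1 + ε := by linarith
  haveI : IsProbabilityMeasure (expMeasure 1) := isProbabilityMeasure_expMeasure one_pos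
  have hHnn : ∀ᵐ ω : Ω, 0 ≤ H ω := by
    rw [ae_iff]
    have hs : {ω : Ω | ¬ 0 ≤ H ω} = H ⁻¹' (Set.Iio 0) := by ext ω; simp [not_le]
    rw [hs, ← Measure.map_apply hHmeas measurableSet_Iio, hHlaw]
    exact my_expMeasure_neg
  have key : ∀ ρ : ℝ, 0 < ρ → volume {ω : Ω | ρ * G ω / (ρ * H ω + 1) < ε}
      = ENNReal.ofReal (1 - Real.exp (-ε/ρ) / (1+ε)) := by
    intro ρ hρ
    have hsetae : {ω : Ω | ρ * G ω / (ρ * H ω + 1) < ε}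
        =ᵐ[volume] {ω : Ω | ρ * G ω < ε * (ρ * H ω + 1)} := by
      rw [Filter.eventuallyEq_set]
      filter_upwards [hHnn] with ω hω
      rw [div_lt_iff₀ (by positivity)]
    rw [measure_congr hsetae]
    have hS : MeasurableSet {p : ℝ × ℝ | ρ * p.1 < ε * (ρ * p.2 + 1)} :=
      measurableSet_lt (measurable_fst.const_mul ρ)
        (((measurable_snd.const_mul ρ).add_const 1).const_mul ε)
    have hmap : volume {ω : Ω | ρ * G ω < ε * (ρ * H ω + 1)}
        = ((expMeasure 1).prod (expMeasure 1)) {p : ℝ × ℝ | ρ * p.1 < ε * (ρ * p.2 + 1)} := by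
      have hpair := (ProbabilityTheory.indepFun_iff_map_prod_eq_prod_map_map
        hGmeas.aemeasurable hHmeas.aemeasurable).mp hindep
      rw [hGlaw, hHlaw] at hpair
      rw [← hpair, Measure.map_apply (hGmeas.prodMk hHmeas) hS]
      rfl
    rw [hmap, Measure.prod_apply_symm hS]
    have hHnnE : ∀ᵐ y ∂(expMeasure 1), 0 ≤ y := by
      rw [ae_iff]
      have hs : {y : ℝ | ¬ 0 ≤ y} = {y : ℝ | y < 0} := by ext y; simp [not_le]
      rw [hs]
      exact my_expMeasure_neg
    have hcong : ∀ᵐ y ∂(expMeasure 1),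
        expMeasure 1 ((fun x => (x, y)) ⁻¹' {p : ℝ × ℝ | ρ * p.1 < ε * (ρ * p.2 + 1)})
          = ENNReal.ofReal (1 - Real.exp (-(ε*y+ε/ρ))) := by
      filter_upwards [hHnnE] with y hy
      have hpre : ((fun x : ℝ => (x, y)) ⁻¹' {p : ℝ × ℝ | ρ * p.1 < ε * (ρ * p.2 + 1)})
          = Set.Iio (ε*y + ε/ρ) := by
        ext x
        simp only [Set.mem_preimage, Set.mem_setOf_eq, Set.mem_Iio]
        rw [show ε*y + ε/ρ = ε*(ρ*y+1)/ρ from by field_simp, lt_div_iff₀ hρ, mul_comm x ρ]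
      rw [hpre]
      exact my_expMeasure_Iio (by positivity)
    rw [lintegral_congr_ae hcong, my_lintegral hε hρ]
  have hnn : ∀ ρ : ℝ, 0 < ρ → 0 ≤ 1 - Real.exp (-ε/ρ) / (1+ε) := by
    intro ρ hρ
    have h1 : Real.exp (-ε/ρ) ≤ 1 := by
      rw [Real.exp_le_one_iff, neg_div]
      exact neg_nonpos.mpr (div_pos hε hρ).le
    have h2 : Real.exp (-ε/ρ) / (1+ε) ≤ 1 := (div_le_one h1ε).mpr (by linarith)
    linarith
  refine ⟨fun ρ hρ => ?_, ?_, by positivity⟩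
  · rw [key ρ hρ, ENNReal.toReal_ofReal (hnn ρ hρ)]
  · have hev : (fun ρ : ℝ => (volume {ω : Ω | ρ * G ω / (ρ * H ω + 1) < ε}).toReal)
        =ᶠ[atTop] fun ρ : ℝ => 1 - Real.exp (-ε/ρ) / (1+ε) := by
      filter_upwards [eventually_gt_atTop 0] with ρ hρ
      rw [key ρ hρ, ENNReal.toReal_ofReal (hnn ρ hρ)]
    rw [Filter.tendsto_congr' hev]
    have h2 : Tendsto (fun ρ : ℝ => -ε/ρ) atTop (nhds 0) :=
      Tendsto.div_atTop tendsto_const_nhds tendsto_id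
    have h3 : Tendsto (fun ρ : ℝ => Real.exp (-ε/ρ)) atTop (nhds 1) := by
      have := (Real.continuous_exp.tendsto 0).comp h2
      simpa [Function.comp_def] using this
    have h4 := (h3.div_const (1+ε)).const_sub 1
    have heq : ε/(1+ε) = 1 - 1/(1+ε) := by field_simp; ring
    rw [heq]
    exact h4
end
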